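/- (Noise bound for the lossy trapdoor function.) Let t, m, ℓ be positive integers with t dividing m and m/t a power of two, and write t̃ = t·log₂(m/t). Let γ ∈ (0,1), α > 0, ρ ∈ (0,1), and ε ∈ (0,1/2) satisfy ε·t ≤ γ/(α+1), ρ·ℓ ≥ t̃, and (γα/(α+1))² ≥ ρ·ln 2. Let E ∈ F_2^{ℓ×m} be a random matrix whose entries are independent Bernoulli(ε) bits. Then the probability that there exists x ∈ F_2^{t̃} with wt(E·spfy_{m,t}(x)) > γℓ is at most 2^{−t̃}. -/

import Mathlib

open Finset

/-- `binExpansion s a b` is the `a`-th bit of the `s`-bit binary expansion of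
`b ∈ {0,…,2^s−1}`, viewed in `F_2`. -/
def binExpansion (s : ℕ) (a : Fin s) (b : Fin (2 ^ s)) : ZMod 2 :=
  if Nat.testBit b.val a.val then 1 else 0

/-- The sparsification map `spfy_{m,t} : F_2^{ts} → F_2^m`, `m = t·2^s`: each block
`x_i ∈ F_2^s` of the input is replaced by the indicator vector of length `2^s` having a
single `1` at the position whose `s`-bit binary expansion is `x_i`. -/
def sparsify (t s : ℕ) (x : Fin t × Fin s → ZMod 2) :
    Fin t × Fin (2 ^ s) → ZMod 2 :=
  fun q => if ∀ a : Fin s, x (q.1, a) = binExpansion s a q.2 then 1 else 0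

section Aux
open Real

lemma aux_Dpos {q : ℝ} (hq0 : 0 ≤ q) (hq1 : q ≤ 1) (x : ℝ) : 0 < 1 - q + q * exp x := by
  rcases eq_or_lt_of_le hq1 with h | h
  · simp [← h]; positivity
  · have : 0 ≤ q * exp x := by positivity
    linarith

lemma aux_bernoulli_mgf {q lam : ℝ} (hq0 : 0 ≤ q) (hq1 : q ≤ 1) (hl : 0 ≤ lam) :
    1 - q + q * exp lam ≤ exp (lam * q + lam ^ 2 / 8) := by
  set D : ℝ → ℝ := fun x => 1 - q + q * exp x with hD
  have hDpos : ∀ x, 0 < D x := fun x => aux_Dpos hq0 hq1 x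
  set g' : ℝ → ℝ := fun x => q + x / 4 - q * exp x / D x with hg'
  set g : ℝ → ℝ := fun x => x * q + x ^ 2 / 8 - Real.log (D x) with hg
  have hDd : ∀ x, HasDerivAt D (q * exp x) x := fun x =>
    (((Real.hasDerivAt_exp x).const_mul q).const_add (1 - q))
  have hgd : ∀ x, HasDerivAt g (g' x) x := by
    intro x
    have h1 : HasDerivAt (fun x : ℝ => x * q) q x := by
      simpa using (hasDerivAt_id x).mul_const q
    have h2 : HasDerivAt (fun x : ℝ => x ^ 2 / 8) (x / 4) x := by
      have := (hasDerivAt_pow 2 x).div_const 8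
      exact this.congr_deriv (by norm_num; ring)
    have h3 : HasDerivAt (fun x => Real.log (D x)) (q * exp x / D x) x :=
      (hDd x).log (hDpos x).ne'
    exact (h1.add h2).sub h3
  have hg'd : ∀ x, HasDerivAt g'
      (1 / 4 - (q * exp x * D x - q * exp x * (q * exp x)) / D x ^ 2) x := by
    intro x
    have h1 : HasDerivAt (fun x : ℝ => q + x / 4) (1 / 4) x := by
      simpa using ((hasDerivAt_id x).div_const 4).const_add q
    have h2 : HasDerivAt (fun x => q * exp x / D x)
        ((q * exp x * D x - q * exp x * (q * exp x)) / D x ^ 2) x :=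
      ((Real.hasDerivAt_exp x).const_mul q).div (hDd x) (hDpos x).ne'
    exact h1.sub h2
  have hg''nonneg : ∀ x,
      0 ≤ 1 / 4 - (q * exp x * D x - q * exp x * (q * exp x)) / D x ^ 2 := by
    intro x
    set u : ℝ := q * exp x / D x with hu
    have hDx := hDpos x
    have hule : q * exp x ≤ D x := by
      simp only [hD]; nlinarith [exp_pos x]
    have hu1 : u ≤ 1 := by rw [hu, div_le_one hDx]; exact hule
    have hu0 : 0 ≤ u := by positivity
    have : (q * exp x * D x - q * exp x * (q * exp x)) / D x ^ 2 = u - u ^ 2 := by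
      rw [hu]; field_simp
    rw [this]; nlinarith [sq_nonneg (u - 1/2)]
  have hmono' : Monotone g' := by
    apply monotone_of_deriv_nonneg (fun x => (hg'd x).differentiableAt)
    intro x; rw [(hg'd x).deriv]; exact hg''nonneg x
  have hg'0 : g' 0 = 0 := by simp [hg', hD]
  have hg'nonneg : ∀ x, 0 ≤ x → 0 ≤ g' x := fun x hx => hg'0 ▸ hmono' hx
  have hmono : MonotoneOn g (Set.Ici (0 : ℝ)) := by
    apply monotoneOn_of_deriv_nonneg (convex_Ici 0)
      (Continuous.continuousOn (by
        fun_prop (disch := intro x; exact (hDpos x).ne')))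
    · intro x hx; exact (hgd x).differentiableAt.differentiableWithinAt
    · intro x hx
      rw [(hgd x).deriv]
      exact hg'nonneg x (le_of_lt (by simpa using hx))
  have hg0 : g 0 = 0 := by simp [hg, hD]
  have hglam : 0 ≤ g lam := hg0 ▸ hmono Set.self_mem_Ici (Set.mem_Ici.2 hl) hl
  have : Real.log (D lam) ≤ lam * q + lam ^ 2 / 8 := by
    simp only [hg] at hglam; linarith
  calc D lam = exp (Real.log (D lam)) := (exp_log (hDpos lam)).symm
    _ ≤ exp (lam * q + lam ^ 2 / 8) := exp_le_exp.2 this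

lemma aux_binExpansion_inj (s : ℕ) :
    Function.Injective (fun b : Fin (2 ^ s) => fun a : Fin s => binExpansion s a b) := by
  intro b b' h
  apply Fin.ext
  apply Nat.eq_of_testBit_eq
  intro a
  by_cases ha : a < s
  · have h2 := congrFun h ⟨a, ha⟩
    simp only [binExpansion] at h2
    by_cases hb : Nat.testBit b.val a <;> by_cases hb' : Nat.testBit b'.val a <;>
      simp_all
  · have h1 : Nat.testBit b.val a = false :=
      Nat.testBit_eq_false_of_lt
        (lt_of_lt_of_le b.isLt (Nat.pow_le_pow_right (by norm_num) (le_of_not_gt ha)))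
    have h2 : Nat.testBit b'.val a = false :=
      Nat.testBit_eq_false_of_lt
        (lt_of_lt_of_le b'.isLt (Nat.pow_le_pow_right (by norm_num) (le_of_not_gt ha)))
    rw [h1, h2]

lemma aux_exists_unique_bin (s : ℕ) (y : Fin s → ZMod 2) :
    ∃! b : Fin (2 ^ s), ∀ a, y a = binExpansion s a b := by
  have hbij : Function.Bijective
      (fun b : Fin (2 ^ s) => fun a : Fin s => binExpansion s a b) := by
    rw [Fintype.bijective_iff_injective_and_card]
    refine ⟨aux_binExpansion_inj s, ?_⟩
    simp [Fintype.card_fun, ZMod.card]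
  obtain ⟨b, hb⟩ := hbij.2 y
  refine ⟨b, fun a => (congrFun hb a).symm, fun b' hb' => hbij.1 ?_⟩
  rw [hb]; funext a; exact (hb' a).symm

end Aux

set_option maxHeartbeats 1000000 in
open Classical in
/-- **Noise bound for the lossy trapdoor function.** Let `t, m, ℓ` be positive integers
with `t ∣ m` and `m/t = 2^s` a power of two (we identify `F_2^m` with functions on
`Fin t × Fin 2^s`), and write `t̃ = t·log₂(m/t) = t·s`. Let `γ ∈ (0,1)`, `α > 0`,
`ρ ∈ (0,1)`, `ε ∈ (0,1/2)` satisfy `ε·t ≤ γ/(α+1)`, `ρ·ℓ ≥ t̃`, and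
`(γα/(α+1))² ≥ ρ·ln 2`. Let `E ∈ F_2^{ℓ×m}` be a random matrix of independent
Bernoulli(`ε`) entries (formalized via product weights). Then the probability that
there exists `x ∈ F_2^{t̃}` with `wt(E·spfy_{m,t}(x)) > γℓ` is at most `2^{−t̃}`. -/
theorem ltdf_noise_bound (t s ℓ : ℕ) (ht : 0 < t) (hs : 0 < s) (hℓ : 0 < ℓ)
    (γ α ρ ε : ℝ) (hγ : γ ∈ Set.Ioo (0 : ℝ) 1) (hα : 0 < α)
    (hρ : ρ ∈ Set.Ioo (0 : ℝ) 1) (hε : ε ∈ Set.Ioo (0 : ℝ) (1/2))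
    (h1 : ε * t ≤ γ / (α + 1)) (h2 : ρ * ℓ ≥ ((t * s : ℕ) : ℝ))
    (h3 : (γ * α / (α + 1)) ^ 2 ≥ ρ * Real.log 2) :
    (∑ E ∈ univ.filter (fun E : Fin ℓ → (Fin t × Fin (2 ^ s)) → ZMod 2 =>
        ∃ x : Fin t × Fin s → ZMod 2,
          γ * ℓ < (hammingNorm (fun j : Fin ℓ => ∑ p, E j p * sparsify t s x p) : ℝ)),
      ∏ j, ∏ p, (if E j p = 1 then ε else 1 - ε))
    ≤ (2 : ℝ) ^ (-(((t * s : ℕ) : ℝ))) := by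
  have hα1 : (0:ℝ) < α + 1 := by linarith
  set q : ℝ := γ / (α + 1) with hqdef
  set δ : ℝ := γ * α / (α + 1) with hδdef
  have hq0 : 0 ≤ q := div_nonneg hγ.1.le hα1.le
  have hq1 : q ≤ 1 := by
    rw [hqdef, div_le_one hα1]; nlinarith [hγ.2]
  have hδpos : 0 < δ := div_pos (mul_pos hγ.1 hα) hα1
  set lam : ℝ := 4 * δ with hlam
  have hlampos : 0 < lam := by positivity
  -- weights
  set w1 : ZMod 2 → ℝ := fun b => if b = 1 then ε else 1 - ε with hw1
  set W : ((Fin t × Fin (2 ^ s)) → ZMod 2) → ℝ := fun r => ∏ p, w1 (r p) with hW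
  have hw1nonneg : ∀ b, 0 ≤ w1 b := by
    intro b; rw [hw1]; dsimp only
    split
    · exact le_of_lt hε.1
    · linarith [hε.2]
  have hw1sum : ∑ b : ZMod 2, w1 b = 1 := by
    have : (Finset.univ : Finset (ZMod 2)) = {0, 1} := by decide
    rw [this, Finset.sum_insert (by decide), Finset.sum_singleton, hw1]
    norm_num
  have hWnonneg : ∀ r, 0 ≤ W r := fun r => Finset.prod_nonneg fun p _ => hw1nonneg _
  have hWsum : ∑ r : (Fin t × Fin (2 ^ s)) → ZMod 2, W r = 1 := by
    rw [hW]
    rw [← Fintype.prod_sum (fun (_ : Fin t × Fin (2 ^ s)) (b : ZMod 2) => w1 b)]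
    simp [hw1sum]
  -- coordinate probability
  have hcoord : ∀ p0 : Fin t × Fin (2 ^ s),
      ∑ r ∈ univ.filter (fun r : (Fin t × Fin (2 ^ s)) → ZMod 2 => r p0 = 1), W r = ε := by
    intro p0
    set g : (Fin t × Fin (2 ^ s)) → ZMod 2 → ℝ :=
      fun p b => if p = p0 then (if b = 1 then ε else 0) else w1 b with hg
    have key : ∀ r : (Fin t × Fin (2 ^ s)) → ZMod 2,
        (if r p0 = 1 then W r else 0) = ∏ p, g p (r p) := by
      intro r
      by_cases h : r p0 = 1
      · rw [if_pos h, hW]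
        apply Finset.prod_congr rfl
        intro p _
        by_cases hp : p = p0
        · subst hp; simp [hg, h, hw1]
        · simp [hg, hp]
      · rw [if_neg h]
        refine (Finset.prod_eq_zero (Finset.mem_univ p0) ?_).symm
        simp [hg, h]
    rw [Finset.sum_filter]
    calc ∑ r : (Fin t × Fin (2 ^ s)) → ZMod 2, (if r p0 = 1 then W r else 0)
        = ∑ r : (Fin t × Fin (2 ^ s)) → ZMod 2, ∏ p, g p (r p) :=
          Finset.sum_congr rfl fun r _ => key r
      _ = ∏ p, ∑ b : ZMod 2, g p b := (Fintype.prod_sum g).symm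
      _ = ε := by
          rw [Finset.prod_eq_single p0]
          · have : (Finset.univ : Finset (ZMod 2)) = {0, 1} := by decide
            rw [this, Finset.sum_insert (by decide), Finset.sum_singleton]
            simp [hg]
          · intro p _ hp
            simp [hg, hp, hw1sum]
          · intro h; exact absurd (Finset.mem_univ p0) h
  -- per-x bound
  have perx : ∀ x : Fin t × Fin s → ZMod 2,
      (∑ E ∈ univ.filter (fun E : Fin ℓ → (Fin t × Fin (2 ^ s)) → ZMod 2 =>
          γ * ℓ < (hammingNorm (fun j : Fin ℓ => ∑ p, E j p * sparsify t s x p) : ℝ)),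
        ∏ j, W (E j)) ≤ Real.exp (-(2 * δ ^ 2 * ℓ)) := by
    intro x
    -- the block indices
    have hub : ∀ i : Fin t, ∃! b : Fin (2 ^ s), ∀ a, x (i, a) = binExpansion s a b := by
      intro i; exact aux_exists_unique_bin s (fun a => x (i, a))
    choose bx hbx using fun i => (hub i).exists
    have hbxuniq : ∀ i b, (∀ a, x (i, a) = binExpansion s a b) → b = bx i := by
      intro i b hb
      obtain ⟨c, hc, hcu⟩ := hub i
      rw [hcu b hb, hcu (bx i) (hbx i)]
    have hsp : ∀ i b, sparsify t s x (i, b) = if b = bx i then 1 else 0 := by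
      intro i b
      unfold sparsify
      by_cases h : ∀ a : Fin s, x (i, a) = binExpansion s a b
      · rw [if_pos h, if_pos (hbxuniq i b h)]
      · rw [if_neg h, if_neg]
        intro hb; subst hb; exact h (hbx i)
    have hY : ∀ r : (Fin t × Fin (2 ^ s)) → ZMod 2,
        (∑ p, r p * sparsify t s x p) = ∑ i, r (i, bx i) := by
      intro r
      rw [Fintype.sum_prod_type]
      apply Finset.sum_congr rfl
      intro i _
      calc ∑ b, r (i, b) * sparsify t s x (i, b)
          = ∑ b, if b = bx i then r (i, b) else 0 := by
            apply Finset.sum_congr rfl; intro b _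
            rw [hsp]; split <;> simp
        _ = r (i, bx i) := by
            simpa using Finset.sum_ite_eq' univ (bx i) (fun b => r (i, b))
    set X1 : ((Fin t × Fin (2 ^ s)) → ZMod 2) → ℝ :=
      fun r => if (∑ i, r (i, bx i)) = 1 then 1 else 0 with hX1
    have hX1nonneg : ∀ r, 0 ≤ X1 r := by
      intro r; rw [hX1]; dsimp only; split <;> norm_num
    have hN : ∀ E : Fin ℓ → (Fin t × Fin (2 ^ s)) → ZMod 2,
        ((hammingNorm (fun j : Fin ℓ => ∑ p, E j p * sparsify t s x p) : ℕ) : ℝ)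
          = ∑ j, X1 (E j) := by
      intro E
      unfold hammingNorm
      rw [Finset.card_filter]
      push_cast
      apply Finset.sum_congr rfl
      intro j _
      rw [hY (E j)]
      simp only [hX1]
      have hz : ∀ z : ZMod 2, (z ≠ 0) ↔ (z = 1) := by decide
      by_cases h : (∑ i, E j (i, bx i)) = 1
      · rw [if_pos ((hz _).2 h), if_pos h]
      · rw [if_neg (fun hh => h ((hz _).1 hh)), if_neg h]
    -- row MGF
    set M : ℝ := ∑ r : (Fin t × Fin (2 ^ s)) → ZMod 2, W r * Real.exp (lam * X1 r) with hM
    set P1 : ℝ := ∑ r ∈ univ.filter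
        (fun r : (Fin t × Fin (2 ^ s)) → ZMod 2 => (∑ i, r (i, bx i)) = 1), W r with hP1
    have hP1nonneg : 0 ≤ P1 := Finset.sum_nonneg fun r _ => hWnonneg r
    have hP1le : P1 ≤ ε * t := by
      have hsubset : ∀ r : (Fin t × Fin (2 ^ s)) → ZMod 2,
          (∑ i, r (i, bx i)) = 1 → ∃ i, r (i, bx i) = 1 := by
        intro r hr
        by_contra hc
        push_neg at hc
        have hz01 : ∀ z : ZMod 2, z ≠ 1 → z = 0 := by decide
        have : ∀ i, r (i, bx i) = 0 := fun i => hz01 _ (hc i)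
        rw [Finset.sum_congr rfl (fun i _ => this i), Finset.sum_const] at hr
        simp at hr
      calc P1 ≤ ∑ r ∈ univ.filter
            (fun r : (Fin t × Fin (2 ^ s)) → ZMod 2 => (∑ i, r (i, bx i)) = 1),
            ∑ i ∈ univ.filter (fun i : Fin t => r (i, bx i) = 1), W r := by
            apply Finset.sum_le_sum
            intro r hr
            obtain ⟨i, hi⟩ := hsubset r (Finset.mem_filter.1 hr).2
            exact Finset.single_le_sum (fun _ _ => hWnonneg r)
              (Finset.mem_filter.2 ⟨Finset.mem_univ i, hi⟩)
        _ = ∑ r ∈ univ.filter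
            (fun r : (Fin t × Fin (2 ^ s)) → ZMod 2 => (∑ i, r (i, bx i)) = 1),
            ∑ i : Fin t, if r (i, bx i) = 1 then W r else 0 := by
            apply Finset.sum_congr rfl; intro r _; rw [Finset.sum_filter]
        _ ≤ ∑ r : (Fin t × Fin (2 ^ s)) → ZMod 2,
            ∑ i : Fin t, if r (i, bx i) = 1 then W r else 0 := by
            apply Finset.sum_le_sum_of_subset_of_nonneg (Finset.filter_subset _ _)
            intro r _ _
            exact Finset.sum_nonneg fun i _ => by split <;> [exact hWnonneg r; rfl]
        _ = ∑ i : Fin t, ∑ r : (Fin t × Fin (2 ^ s)) → ZMod 2,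
            if r (i, bx i) = 1 then W r else 0 := Finset.sum_comm
        _ = ∑ i : Fin t, (ε : ℝ) := by
            apply Finset.sum_congr rfl
            intro i _
            rw [← Finset.sum_filter]
            exact hcoord (i, bx i)
        _ = ε * t := by simp [mul_comm]
    have hMeq : M = 1 + P1 * (Real.exp lam - 1) := by
      rw [hM]
      have split : ∀ r : (Fin t × Fin (2 ^ s)) → ZMod 2,
          W r * Real.exp (lam * X1 r)
            = (if (∑ i, r (i, bx i)) = 1 then W r * (Real.exp lam - 1) else 0) + W r := by
        intro r
        simp only [hX1]
        by_cases hc : (∑ i, r (i, bx i)) = 1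
        · rw [if_pos hc, if_pos hc, mul_one]; ring
        · rw [if_neg hc, if_neg hc, mul_zero, Real.exp_zero]; ring
      rw [Finset.sum_congr rfl fun r _ => split r, Finset.sum_add_distrib, hWsum,
        ← Finset.sum_filter, ← Finset.sum_mul, ← hP1]
      ring
    have hMle : M ≤ Real.exp (lam * q + lam ^ 2 / 8) := by
      have hexplam : (1:ℝ) ≤ Real.exp lam := by
        rw [← Real.exp_zero]; exact Real.exp_le_exp.2 (le_of_lt hlampos)
      have h4 : P1 ≤ q := le_trans hP1le h1
      calc M = 1 + P1 * (Real.exp lam - 1) := hMeq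
        _ ≤ 1 + q * (Real.exp lam - 1) := by nlinarith
        _ = 1 - q + q * Real.exp lam := by ring
        _ ≤ Real.exp (lam * q + lam ^ 2 / 8) :=
            aux_bernoulli_mgf hq0 hq1 (le_of_lt hlampos)
    have hMnonneg : 0 ≤ M :=
      Finset.sum_nonneg fun r _ => mul_nonneg (hWnonneg r) (Real.exp_pos _).le
    -- Chernoff
    calc (∑ E ∈ univ.filter (fun E : Fin ℓ → (Fin t × Fin (2 ^ s)) → ZMod 2 =>
          γ * ℓ < (hammingNorm (fun j : Fin ℓ => ∑ p, E j p * sparsify t s x p) : ℝ)),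
        ∏ j, W (E j))
        ≤ ∑ E ∈ univ.filter (fun E : Fin ℓ → (Fin t × Fin (2 ^ s)) → ZMod 2 =>
            γ * ℓ < (hammingNorm (fun j : Fin ℓ => ∑ p, E j p * sparsify t s x p) : ℝ)),
          (∏ j, W (E j)) * Real.exp (lam * ((∑ j, X1 (E j)) - γ * ℓ)) := by
          apply Finset.sum_le_sum
          intro E hE
          have hEcond := (Finset.mem_filter.1 hE).2
          rw [hN E] at hEcond
          have : (1:ℝ) ≤ Real.exp (lam * ((∑ j, X1 (E j)) - γ * ℓ)) := by
            rw [← Real.exp_zero]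
            apply Real.exp_le_exp.2
            have h0 : 0 ≤ (∑ j, X1 (E j)) - γ * ℓ := by linarith
            exact mul_nonneg hlampos.le h0
          exact le_mul_of_one_le_right (Finset.prod_nonneg fun j _ => hWnonneg _) this
      _ ≤ ∑ E : Fin ℓ → (Fin t × Fin (2 ^ s)) → ZMod 2,
          (∏ j, W (E j)) * Real.exp (lam * ((∑ j, X1 (E j)) - γ * ℓ)) := by
          apply Finset.sum_le_sum_of_subset_of_nonneg (Finset.filter_subset _ _)
          intro E _ _
          exact mul_nonneg (Finset.prod_nonneg fun j _ => hWnonneg _) (Real.exp_pos _).le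
      _ = Real.exp (-(lam * (γ * ℓ))) * ∑ E : Fin ℓ → (Fin t × Fin (2 ^ s)) → ZMod 2,
          ∏ j, (W (E j) * Real.exp (lam * X1 (E j))) := by
          rw [Finset.mul_sum]
          apply Finset.sum_congr rfl
          intro E _
          rw [Finset.prod_mul_distrib, ← Real.exp_sum]
          rw [mul_sub, Finset.mul_sum]
          rw [Real.exp_sub]
          rw [div_eq_mul_inv, ← Real.exp_neg]
          ring
      _ = Real.exp (-(lam * (γ * ℓ))) * M ^ ℓ := by
          congr 1
          rw [← Fintype.prod_sum (fun (_ : Fin ℓ) (r : (Fin t × Fin (2 ^ s)) → ZMod 2) =>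
            W r * Real.exp (lam * X1 r))]
          rw [← hM, Finset.prod_const, Finset.card_univ, Fintype.card_fin]
      _ ≤ Real.exp (-(lam * (γ * ℓ))) * Real.exp (lam * q + lam ^ 2 / 8) ^ ℓ := by
          apply mul_le_mul_of_nonneg_left _ (Real.exp_pos _).le
          exact pow_le_pow_left₀ hMnonneg hMle ℓ
      _ = Real.exp (-(lam * (γ * ℓ)) + ℓ * (lam * q + lam ^ 2 / 8)) := by
          rw [← Real.exp_nat_mul, ← Real.exp_add]
      _ = Real.exp (-(2 * δ ^ 2 * ℓ)) := by
          congr 1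
          have hγq : γ - q = δ := by
            rw [hqdef, hδdef]; field_simp; ring
          rw [hlam]
          linear_combination (-(4 * δ * (ℓ:ℝ))) * hγq
  -- union bound and final computation
  have hwform : ∀ E : Fin ℓ → (Fin t × Fin (2 ^ s)) → ZMod 2,
      (∏ j, ∏ p, (if E j p = 1 then ε else 1 - ε)) = ∏ j, W (E j) := fun E => rfl
  set n : ℝ := ((t * s : ℕ) : ℝ) with hn
  have hcardX : (Fintype.card (Fin t × Fin s → ZMod 2) : ℝ) = (2:ℝ) ^ n := by
    rw [hn, Fintype.card_fun, ZMod.card, Fintype.card_prod, Fintype.card_fin,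
      Fintype.card_fin]
    rw [Real.rpow_natCast]
    push_cast
    ring
  have hlog2 : 0 < Real.log 2 := Real.log_pos one_lt_two
  have hexp2 : Real.exp (-(2 * δ ^ 2 * ℓ)) ≤ (2:ℝ) ^ (-(2 * n)) := by
    rw [Real.rpow_def_of_pos two_pos]
    apply Real.exp_le_exp.2
    have hint1 : δ ^ 2 * ℓ ≥ ρ * Real.log 2 * ℓ :=
      mul_le_mul_of_nonneg_right h3 (Nat.cast_nonneg ℓ)
    have hint2 : ρ * ℓ * Real.log 2 ≥ n * Real.log 2 :=
      mul_le_mul_of_nonneg_right h2 hlog2.le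
    nlinarith
  calc (∑ E ∈ univ.filter (fun E : Fin ℓ → (Fin t × Fin (2 ^ s)) → ZMod 2 =>
        ∃ x : Fin t × Fin s → ZMod 2,
          γ * ℓ < (hammingNorm (fun j : Fin ℓ => ∑ p, E j p * sparsify t s x p) : ℝ)),
      ∏ j, ∏ p, (if E j p = 1 then ε else 1 - ε))
      = ∑ E ∈ univ.filter (fun E : Fin ℓ → (Fin t × Fin (2 ^ s)) → ZMod 2 =>
          ∃ x : Fin t × Fin s → ZMod 2,
            γ * ℓ < (hammingNorm (fun j : Fin ℓ => ∑ p, E j p * sparsify t s x p) : ℝ)),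
        ∏ j, W (E j) := Finset.sum_congr rfl fun E _ => hwform E
    _ ≤ ∑ E ∈ univ.filter (fun E : Fin ℓ → (Fin t × Fin (2 ^ s)) → ZMod 2 =>
          ∃ x : Fin t × Fin s → ZMod 2,
            γ * ℓ < (hammingNorm (fun j : Fin ℓ => ∑ p, E j p * sparsify t s x p) : ℝ)),
        ∑ x ∈ univ.filter (fun x : Fin t × Fin s → ZMod 2 =>
          γ * ℓ < (hammingNorm (fun j : Fin ℓ => ∑ p, E j p * sparsify t s x p) : ℝ)),
          ∏ j, W (E j) := by
        apply Finset.sum_le_sum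
        intro E hE
        obtain ⟨x, hx⟩ := (Finset.mem_filter.1 hE).2
        refine Finset.single_le_sum
          (f := fun _ => ∏ j, W (E j))
          (fun _ _ => Finset.prod_nonneg fun j _ => hWnonneg _) (a := x) ?_
        simp only [Finset.mem_filter, Finset.mem_univ, true_and]
        exact hx
    _ = ∑ E ∈ univ.filter (fun E : Fin ℓ → (Fin t × Fin (2 ^ s)) → ZMod 2 =>
          ∃ x : Fin t × Fin s → ZMod 2,
            γ * ℓ < (hammingNorm (fun j : Fin ℓ => ∑ p, E j p * sparsify t s x p) : ℝ)),
        ∑ x : Fin t × Fin s → ZMod 2,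
          if γ * ℓ < (hammingNorm (fun j : Fin ℓ => ∑ p, E j p * sparsify t s x p) : ℝ)
          then ∏ j, W (E j) else 0 :=
        Finset.sum_congr rfl fun E _ => Finset.sum_filter _ _
    _ ≤ ∑ E : Fin ℓ → (Fin t × Fin (2 ^ s)) → ZMod 2,
        ∑ x : Fin t × Fin s → ZMod 2,
          if γ * ℓ < (hammingNorm (fun j : Fin ℓ => ∑ p, E j p * sparsify t s x p) : ℝ)
          then ∏ j, W (E j) else 0 := by
        apply Finset.sum_le_sum_of_subset_of_nonneg (Finset.filter_subset _ _)
        intro E _ _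
        refine Finset.sum_nonneg fun x _ => ?_
        split
        · exact Finset.prod_nonneg fun j _ => hWnonneg _
        · rfl
    _ = ∑ x : Fin t × Fin s → ZMod 2,
        ∑ E ∈ univ.filter (fun E : Fin ℓ → (Fin t × Fin (2 ^ s)) → ZMod 2 =>
          γ * ℓ < (hammingNorm (fun j : Fin ℓ => ∑ p, E j p * sparsify t s x p) : ℝ)),
          ∏ j, W (E j) := by
        rw [Finset.sum_comm]
        exact Finset.sum_congr rfl fun x _ => (Finset.sum_filter _ _).symm
    _ ≤ ∑ _x : Fin t × Fin s → ZMod 2, Real.exp (-(2 * δ ^ 2 * ℓ)) :=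
        Finset.sum_le_sum fun x _ => perx x
    _ = (Fintype.card (Fin t × Fin s → ZMod 2) : ℝ) * Real.exp (-(2 * δ ^ 2 * ℓ)) := by
        rw [Finset.sum_const, nsmul_eq_mul, Finset.card_univ]
    _ ≤ (2:ℝ) ^ n * (2:ℝ) ^ (-(2 * n)) := by
        rw [hcardX]
        exact mul_le_mul_of_nonneg_left hexp2 (Real.rpow_nonneg (by norm_num) n)
    _ = (2:ℝ) ^ (-n) := by
        rw [← Real.rpow_add two_pos]
        congr 1
        ring
    _ = (2 : ℝ) ^ (-(((t * s : ℕ) : ℝ))) := by rw [hn]
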